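/- Let ψ: ℝ^N → ℝ be differentiable with L-Lipschitz gradient and also μ-strongly convex, and let α ∈ (0, 1/L). Suppose a sequence {v^{(k)}} in a set Ω converges to v* ∈ Ω, satisfies the sufficient-decrease inequality ψ(v^{(k+1)}) + ½(1/α − L)‖v^{(k+1)} − v^{(k)}‖² ≤ ψ(v^{(k)}), and for all k large, ⟨∇ψ(v*), v^{(k)} − v*⟩ ≥ 0 and ψ(v^{(k+1)}) − ψ(v*) ≤ (1/(2α))(‖v^{(k)} − v*‖² − ‖v^{(k+1)} − v*‖²). Then ψ(v^{(k)}) − ψ(v*) = O(1/k) and ‖v^{(k)} − v*‖₂ = O(1/√k). -/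

import Mathlib

open Filter
open scoped RealInnerProductSpace

private lemma sc_key (N : ℕ) (ψ : EuclideanSpace ℝ (Fin N) → ℝ)
    (g : EuclideanSpace ℝ (Fin N) → EuclideanSpace ℝ (Fin N)) (μ : ℝ)
    (hgrad : ∀ v, HasGradientAt ψ (g v) v)
    (hsc : ConvexOn ℝ Set.univ (fun v => ψ v - (μ/2) * ‖v‖^2))
    (vs x : EuclideanSpace ℝ (Fin N)) :
    ⟪g vs, x - vs⟫ + μ/2 * ‖x - vs‖^2 ≤ ψ x - ψ vs := by
  set w : EuclideanSpace ℝ (Fin N) := x - vs with hw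
  set A : ℝ →ᵃ[ℝ] EuclideanSpace ℝ (Fin N) := AffineMap.lineMap vs x with hA
  have hAt : ∀ t : ℝ, A t = vs + t • w := by
    intro t; simp [hA, AffineMap.lineMap_apply, hw]; abel
  have hA0 : A 0 = vs := by simp [hA]
  have hA1 : A 1 = x := by simp [hA]
  have hconv1 : ConvexOn ℝ Set.univ ((fun v => ψ v - (μ/2) * ‖v‖^2) ∘ A) := by
    have := hsc.comp_affineMap A
    simpa using this
  have hc : HasDerivAt (fun t : ℝ => A t) w 0 := by
    simp only [hAt]
    simpa using ((hasDerivAt_id (0:ℝ)).smul_const w).const_add vs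
  have hψd : HasDerivAt (fun t : ℝ => ψ (A t)) ⟪g vs, w⟫ 0 := by
    have h1 : HasFDerivAt ψ (InnerProductSpace.toDual ℝ _ (g vs)) (A 0) := by
      rw [hA0]; exact hasGradientAt_iff_hasFDerivAt.mp (hgrad vs)
    have h2 := h1.comp_hasDerivAt (0:ℝ) hc
    exact h2
  have hqeq : ∀ t : ℝ, (μ/2) * ‖A t‖^2
      = (μ/2) * (‖vs‖^2 + 2 * ⟪vs, w⟫ * t + ‖w‖^2 * t^2) := by
    intro t
    rw [hAt, show vs + t • w = vs + t • w from rfl]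
    rw [norm_add_sq_real, real_inner_smul_right, norm_smul, Real.norm_eq_abs, mul_pow, sq_abs]
    ring
  have hqd : HasDerivAt (fun t : ℝ => (μ/2) * ‖A t‖^2) (μ * ⟪vs, w⟫) 0 := by
    have hp : HasDerivAt (fun t : ℝ => (μ/2) * (‖vs‖^2 + 2 * ⟪vs, w⟫ * t + ‖w‖^2 * t^2))
        (μ * ⟪vs, w⟫) 0 := by
      have h1 : HasDerivAt (fun t : ℝ => ‖vs‖^2 + 2 * ⟪vs, w⟫ * t + ‖w‖^2 * t^2)
          (2 * ⟪vs, w⟫ * 1 + ‖w‖^2 * ((2:ℕ) * (0:ℝ)^(2-1))) 0 := by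
        have ha := ((hasDerivAt_id (0:ℝ)).const_mul (2 * ⟪vs, w⟫)).const_add (‖vs‖^2)
        have hb := ((hasDerivAt_pow 2 (0:ℝ))).const_mul (‖w‖^2)
        exact ha.add hb
      have h2 := h1.const_mul (μ/2)
      refine h2.congr_deriv ?_
      push_cast
      ring
    simp only [hqeq]
    exact hp
  have hh : HasDerivAt ((fun v => ψ v - (μ/2) * ‖v‖^2) ∘ A) (⟪g vs, w⟫ - μ * ⟪vs, w⟫) 0 :=
    hψd.sub hqd
  have hslope := hconv1.le_slope_of_hasDerivAt (Set.mem_univ (0:ℝ)) (Set.mem_univ (1:ℝ))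
    zero_lt_one hh
  rw [slope_def_field] at hslope
  simp only [Function.comp, hA0, hA1] at hslope
  have hns : ‖x - vs‖^2 = ‖x‖^2 - 2*⟪x, vs⟫ + ‖vs‖^2 := norm_sub_sq_real x vs
  have hinn : ⟪vs, w⟫ = ⟪vs, x⟫ - ‖vs‖^2 := by
    rw [hw, inner_sub_right, real_inner_self_eq_norm_sq]
  have hcomm : ⟪vs, x⟫ = ⟪x, vs⟫ := real_inner_comm x vs
  have hwn : ‖w‖^2 = ‖x - vs‖^2 := by rw [hw]
  have heq : μ/2 * ‖w‖^2 = μ/2 * (‖x‖^2 - ‖vs‖^2) - μ * ⟪vs, w⟫ := by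
    rw [hwn, hns, hinn, hcomm]; ring
  linarith [hslope, heq]

private lemma aux_bdd (a : ℕ → ℝ) (K : ℕ) :
    ∀ C0 : ℝ, (∀ k, K ≤ k → a k ≤ C0) → ∃ C : ℝ, ∀ k, a k ≤ C := by
  induction K with
  | zero => exact fun C0 h => ⟨C0, fun k => h k (Nat.zero_le k)⟩
  | succ K ih =>
    intro C0 h
    refine ih (max C0 (a K)) (fun k hk => ?_)
    rcases eq_or_lt_of_le hk with he | hl
    · rw [← he]; exact le_max_right _ _
    · exact le_trans (h k hl) (le_max_left _ _)

theorem stmt_16 (N : ℕ) (ψ : EuclideanSpace ℝ (Fin N) → ℝ)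
    (g : EuclideanSpace ℝ (Fin N) → EuclideanSpace ℝ (Fin N))
    (L μ α : ℝ) (hL : 0 < L) (hμ : 0 < μ)
    (hgrad : ∀ v, HasGradientAt ψ (g v) v)
    (hLip : LipschitzWith (Real.toNNReal L) g)
    (hsc : ConvexOn ℝ Set.univ (fun v => ψ v - (μ/2) * ‖v‖^2))
    (hα : 0 < α) (hα' : α < 1 / L)
    (Ω : Set (EuclideanSpace ℝ (Fin N)))
    (v : ℕ → EuclideanSpace ℝ (Fin N)) (hvΩ : ∀ k, v k ∈ Ω)
    (vs : EuclideanSpace ℝ (Fin N)) (hvsΩ : vs ∈ Ω)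
    (hconv : Tendsto v atTop (nhds vs))
    (hdecr : ∀ k, ψ (v (k+1)) + (1/2) * (1/α - L) * ‖v (k+1) - v k‖^2 ≤ ψ (v k))
    (hlarge : ∃ K : ℕ, ∀ k ≥ K,
      0 ≤ ⟪g vs, v k - vs⟫ ∧
      ψ (v (k+1)) - ψ vs ≤ (1 / (2*α)) * (‖v k - vs‖^2 - ‖v (k+1) - vs‖^2)) :
    (∃ C : ℝ, ∀ k : ℕ, 1 ≤ k → |ψ (v k) - ψ vs| ≤ C / k) ∧
    (∃ C : ℝ, ∀ k : ℕ, 1 ≤ k → ‖v k - vs‖ ≤ C / Real.sqrt k) := by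
  obtain ⟨K, hK⟩ := hlarge
  have hLα : 0 < 1/α - L := by
    have h1 : α * L < 1 := by
      calc α * L < (1/L) * L := mul_lt_mul_of_pos_right hα' hL
        _ = 1 := by field_simp
    have h2 : L < 1/α := by
      rw [lt_div_iff₀ hα]; linarith [h1]
    linarith
  have hmono : ∀ k, ψ (v (k+1)) ≤ ψ (v k) := by
    intro k
    have h1 := hdecr k
    nlinarith [sq_nonneg ‖v (k+1) - v k‖]
  have hanti : Antitone (fun k => ψ (v k)) := antitone_nat_of_succ_le hmono
  have htend : Tendsto (fun k => ψ (v k)) atTop (nhds (ψ vs)) :=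
    ((hgrad vs).continuousAt.tendsto).comp hconv
  have hge : ∀ k, ψ vs ≤ ψ (v k) := fun k => hanti.le_of_tendsto htend k
  have h2α : 0 < 1/(2*α) := by positivity
  -- telescoping
  have htel : ∀ n : ℕ, 1/(2*α) * ‖v (K+n) - vs‖^2
      + ∑ j ∈ Finset.range n, (ψ (v (K+j+1)) - ψ vs) ≤ 1/(2*α) * ‖v K - vs‖^2 := by
    intro n
    induction n with
    | zero => simp
    | succ n ih =>
      have h2 := (hK (K+n) (Nat.le_add_right _ _)).2
      rw [mul_sub] at h2
      rw [Finset.sum_range_succ]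
      have hidx : K + (n+1) = (K+n)+1 := rfl
      rw [hidx]
      linarith [ih, h2]
  have hrate : ∀ n : ℕ, (n:ℝ) * (ψ (v (K+n)) - ψ vs) ≤ 1/(2*α) * ‖v K - vs‖^2 := by
    intro n
    have hsum : (n:ℝ) * (ψ (v (K+n)) - ψ vs)
        ≤ ∑ j ∈ Finset.range n, (ψ (v (K+j+1)) - ψ vs) := by
      have hterm : ∀ j ∈ Finset.range n, ψ (v (K+n)) - ψ vs ≤ ψ (v (K+j+1)) - ψ vs := by
        intro j hj
        have hle : K+j+1 ≤ K+n := by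
          have := Finset.mem_range.mp hj; omega
        have := hanti hle
        simpa using by linarith [this]
      have := Finset.card_nsmul_le_sum (Finset.range n)
        (fun j => ψ (v (K+j+1)) - ψ vs) (ψ (v (K+n)) - ψ vs) hterm
      simpa [Finset.card_range, nsmul_eq_mul] using this
    have hnn : 0 ≤ 1/(2*α) * ‖v (K+n) - vs‖^2 := by positivity
    linarith [htel n, hsum, hnn]
  set B : ℝ := 1/(2*α) * ‖v K - vs‖^2 with hB
  have h2B : ∀ k, 2*K+1 ≤ k → (k:ℝ) * (ψ (v k) - ψ vs) ≤ 2*B := by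
    intro k hk
    obtain ⟨n, rfl⟩ : ∃ n, k = K + n := ⟨k - K, by omega⟩
    have h1 := hrate n
    have hD : 0 ≤ ψ (v (K+n)) - ψ vs := by linarith [hge (K+n)]
    have hKn : (K:ℝ) ≤ (n:ℝ) := by exact_mod_cast (by omega : K ≤ n)
    push_cast
    nlinarith [h1, hD, hKn]
  obtain ⟨C, hC⟩ := aux_bdd (fun k => (k:ℝ) * (ψ (v k) - ψ vs)) (2*K+1) (2*B) h2B
  have hC0 : 0 ≤ C := by simpa using hC 0
  constructor
  · refine ⟨C, fun k hk => ?_⟩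
    have hkpos : (0:ℝ) < (k:ℝ) := by exact_mod_cast hk
    rw [abs_of_nonneg (by linarith [hge k])]
    rw [le_div_iff₀ hkpos]
    have := hC k
    linarith [this]
  · have hkey := sc_key N ψ g μ hgrad hsc vs
    have hns : ∀ k, 2*K+1 ≤ k → Real.sqrt k * ‖v k - vs‖ ≤ Real.sqrt (2*C/μ) := by
      intro k hk
      have h1 := (hK k (by omega)).1
      have h2 := hkey (v k)
      have h3 : (k:ℝ) * (ψ (v k) - ψ vs) ≤ C := hC k
      have hk0 : (0:ℝ) ≤ (k:ℝ) := Nat.cast_nonneg k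
      have hD : μ/2 * ‖v k - vs‖^2 ≤ ψ (v k) - ψ vs := by linarith
      have h4 : (k:ℝ) * ‖v k - vs‖^2 ≤ 2*C/μ := by
        rw [le_div_iff₀ hμ]
        nlinarith [mul_le_mul_of_nonneg_left hD hk0, h3]
      have h5 : (0:ℝ) ≤ Real.sqrt k * ‖v k - vs‖ := by positivity
      rw [Real.le_sqrt h5 (by positivity)]
      calc (Real.sqrt k * ‖v k - vs‖)^2 = (Real.sqrt k)^2 * ‖v k - vs‖^2 := by ring
        _ = (k:ℝ) * ‖v k - vs‖^2 := by rw [Real.sq_sqrt hk0]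
        _ ≤ 2*C/μ := h4
    obtain ⟨C2, hC2⟩ := aux_bdd (fun k => Real.sqrt k * ‖v k - vs‖) (2*K+1)
      (Real.sqrt (2*C/μ)) hns
    refine ⟨C2, fun k hk => ?_⟩
    have hkpos : (0:ℝ) < (k:ℝ) := by exact_mod_cast hk
    have hsq : 0 < Real.sqrt k := Real.sqrt_pos.mpr hkpos
    rw [le_div_iff₀ hsq]
    have := hC2 k
    linarith [this, mul_comm (Real.sqrt k) ‖v k - vs‖]
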